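/- Let u : ℝ≥0 → ℝ² be continuous and let (z_n, u_n) be a sequence of pairs of continuous functions converging uniformly on compact sets to (z, u), where each u_n has both components nondecreasing, and for j = 1,2 each u_{n,j} is constant on any open interval (a,b) on which z_n avoids a fixed closed set F_j ⊆ ℝ² (i.e., z_n(q) ∉ F_j for q ∈ (a,b)). Then u has both components nondecreasing, and for j = 1,2, u_j is constant on any open interval (a,b) such that z(q) ∉ F_j for all q ∈ (a,b). -/

import Mathlib

open Set

/-- closedness of the Skorokhod-type complementarity conditions under
uniform convergence on compact sets. If `(z n, u n) → (zl, ul)` uniformly on compacts,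
each `u n` has nondecreasing components, and `u n`'s `j`-th component is constant on
every open interval where `z n` avoids the closed set `F j`, then the same two
properties hold for the limit pair `(zl, ul)`. -/
theorem stmt16 (z : ℕ → ℝ → EuclideanSpace ℝ (Fin 2)) (u : ℕ → ℝ → Fin 2 → ℝ)
    (zl : ℝ → EuclideanSpace ℝ (Fin 2)) (ul : ℝ → Fin 2 → ℝ)
    (F : Fin 2 → Set (EuclideanSpace ℝ (Fin 2))) (hF : ∀ j, IsClosed (F j))
    (hzc : ∀ n, Continuous (z n)) (huc : ∀ n, Continuous (u n))
    (hulc : Continuous ul)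
    (hconv : ∀ m : ℝ, ∀ ε > (0 : ℝ), ∃ N : ℕ, ∀ n ≥ N, ∀ t ∈ Set.Icc (0 : ℝ) m,
      ‖z n t - zl t‖ ≤ ε ∧ ∀ j, |u n t j - ul t j| ≤ ε)
    (hmono : ∀ n j, MonotoneOn (fun t => u n t j) (Set.Ici 0))
    (hflat : ∀ n, ∀ j, ∀ a b : ℝ, 0 ≤ a →
      (∀ q : ℝ, a < q → q < b → z n q ∉ F j) →
      ∀ s ∈ Set.Ioo a b, ∀ t ∈ Set.Ioo a b, u n s j = u n t j) :
    (∀ j, MonotoneOn (fun t => ul t j) (Set.Ici 0)) ∧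
      ∀ j, ∀ a b : ℝ, 0 ≤ a →
        (∀ q : ℝ, a < q → q < b → zl q ∉ F j) →
        ∀ s ∈ Set.Ioo a b, ∀ t ∈ Set.Ioo a b, ul s j = ul t j := by
  constructor
  · intro j s hs t ht hst
    simp only [mem_Ici] at hs ht
    by_contra h
    push_neg at h
    set ε := (ul s j - ul t j) / 4 with hε
    have hεpos : 0 < ε := by simp only [hε]; linarith
    obtain ⟨N, hN⟩ := hconv t ε hεpos
    have h1 := abs_le.1 ((hN N le_rfl s ⟨hs, hst⟩).2 j)
    have h2 := abs_le.1 ((hN N le_rfl t ⟨ht, le_rfl⟩).2 j)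
    have h3 := hmono N j hs ht hst
    simp only at h3
    linarith [h1.1, h1.2, h2.1, h2.2]
  · intro j a b ha havoid
    have main : ∀ s t : ℝ, s ∈ Ioo a b → t ∈ Ioo a b → s ≤ t → ul s j = ul t j := by
      intro s t hs ht hst
      set s' := (a + s) / 2 with hs'def
      set t' := (t + b) / 2 with ht'def
      have has' : a < s' := by simp only [hs'def]; linarith [hs.1]
      have hs's : s' < s := by simp only [hs'def]; linarith [hs.1]
      have htt' : t < t' := by simp only [ht'def]; linarith [ht.2]
      have ht'b : t' < b := by simp only [ht'def]; linarith [ht.2]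
      have hs'0 : (0 : ℝ) ≤ s' := le_of_lt (lt_of_le_of_lt ha has')
      have hsub : Icc s' t' ⊆ Icc 0 t' :=
        Icc_subset_Icc hs'0 le_rfl
      -- continuity of zl on Icc 0 t'
      have hzlc : ContinuousOn zl (Icc 0 t') := by
        have hto : TendstoUniformlyOn z zl Filter.atTop (Icc 0 t') := by
          rw [Metric.tendstoUniformlyOn_iff]
          intro ε hε
          obtain ⟨N, hN⟩ := hconv t' (ε / 2) (by linarith)
          refine Filter.eventually_atTop.2 ⟨N, fun n hn x hx => ?_⟩
          have h1 := (hN n hn x hx).1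
          have : dist (zl x) (z n x) = ‖z n x - zl x‖ := by
            rw [dist_eq_norm, norm_sub_rev]
          rw [this]
          linarith
        exact hto.continuousOn (Filter.Frequently.of_forall fun n => (hzc n).continuousOn)
      -- a positive lower bound for the distance from zl '' Icc s' t' to F j
      obtain ⟨δ, hδpos, hδ⟩ : ∃ δ > 0, ∀ q ∈ Icc s' t', ∀ x ∈ F j, δ ≤ dist (zl q) x := by
        rcases (F j).eq_empty_or_nonempty with hFe | hFe
        · exact ⟨1, one_pos, fun q _ x hx => by simp [hFe] at hx⟩
        · have hcont : ContinuousOn (fun q => Metric.infDist (zl q) (F j)) (Icc s' t') :=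
            (Metric.continuous_infDist_pt (F j)).comp_continuousOn (hzlc.mono hsub)
          obtain ⟨q0, hq0, hq0min⟩ :=
            isCompact_Icc.exists_isMinOn ⟨s', ⟨le_rfl, by linarith⟩⟩ hcont
          have hq0mem : zl q0 ∉ F j :=
            havoid q0 (lt_of_lt_of_le has' hq0.1) (lt_of_le_of_lt hq0.2 ht'b)
          have hpos : 0 < Metric.infDist (zl q0) (F j) := by
            rcases lt_or_eq_of_le (Metric.infDist_nonneg : 0 ≤ Metric.infDist (zl q0) (F j))
              with h | h
            · exact h
            · exact absurd (((hF j).mem_iff_infDist_zero hFe).2 h.symm) hq0mem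
          refine ⟨Metric.infDist (zl q0) (F j), hpos, fun q hq x hx => ?_⟩
          exact le_trans (hq0min hq) (Metric.infDist_le_dist_of_mem hx)
      -- main estimate
      have key : ∀ ε > (0 : ℝ), |ul s j - ul t j| ≤ 2 * ε := by
        intro ε hε
        set ε' := min ε (δ / 2) with hε'def
        have hε'pos : 0 < ε' := lt_min hε (by linarith)
        obtain ⟨N, hN⟩ := hconv t' ε' hε'pos
        have havoidN : ∀ q : ℝ, s' < q → q < t' → z N q ∉ F j := by
          intro q hq1 hq2 hmem
          have hqIcc : q ∈ Icc (0 : ℝ) t' := ⟨le_trans hs'0 (le_of_lt hq1), le_of_lt hq2⟩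
          have h1 := (hN N le_rfl q hqIcc).1
          have h2 := hδ q ⟨le_of_lt hq1, le_of_lt hq2⟩ (z N q) hmem
          have : dist (zl q) (z N q) = ‖z N q - zl q‖ := by
            rw [dist_eq_norm, norm_sub_rev]
          rw [this] at h2
          have : ε' ≤ δ / 2 := min_le_right _ _
          linarith
        have hflatN := hflat N j s' t' hs'0 havoidN s ⟨hs's, lt_of_le_of_lt hst htt'⟩
          t ⟨lt_of_lt_of_le hs's hst, htt'⟩
        have h1 := abs_le.1 ((hN N le_rfl s
          ⟨le_trans hs'0 (le_of_lt hs's), by linarith⟩).2 j)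
        have h2 := abs_le.1 ((hN N le_rfl t
          ⟨le_trans hs'0 (le_of_lt (lt_of_lt_of_le hs's hst)), le_of_lt htt'⟩).2 j)
        have hε'le : ε' ≤ ε := min_le_left _ _
        rw [abs_le]
        constructor <;> nlinarith [h1.1, h1.2, h2.1, h2.2]
      by_contra hne
      have habs : 0 < |ul s j - ul t j| := abs_pos.2 (sub_ne_zero.2 hne)
      have := key (|ul s j - ul t j| / 4) (by linarith)
      linarith
    intro s hs t ht
    rcases le_total s t with h | h
    · exact main s t hs ht h
    · exact (main t s ht hs h).symm
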